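/- Bound on the spectral norm difference of projections: if P₁ = Φ₁(Φ₁ᵀΦ₁)⁻¹Φ₁ᵀ and P₂ = Φ₂(Φ₂ᵀΦ₂)⁻¹Φ₂ᵀ with Φ₂ = Φ₁ + E and N⁻¹Φ₁ᵀΦ₁ has eigenvalues bounded in [c, C] (0 < c ≤ C), and ‖E‖₂ ≤ η with η sufficiently small so that N⁻¹Φ₂ᵀΦ₂ remains invertible, then ‖P₂ − P₁‖₂ ≤ K·η/√N for a constant K depending only on c, C and ‖Φ₁‖₂/√N. -/

import Mathlib

open Matrix
open scoped Matrix.Norms.L2Operator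

lemma diag_norm_le {n : Type*} [Fintype n] [DecidableEq n] (d : n → ℝ) (b : ℝ)
    (hb : 0 ≤ b) (h : ∀ i, |d i| ≤ b) : ‖diagonal d‖ ≤ b := by
  rw [Matrix.l2_opNorm_def]
  apply ContinuousLinearMap.opNorm_le_bound _ hb
  intro x
  have h1 : (((Matrix.toEuclideanLin).trans LinearMap.toContinuousLinearMap)
      (diagonal d) : EuclideanSpace ℝ n →L[ℝ] EuclideanSpace ℝ n) x
      = Matrix.toEuclideanLin (diagonal d) x := rfl
  rw [h1, Matrix.toEuclideanLin_apply]
  rw [EuclideanSpace.norm_eq, EuclideanSpace.norm_eq]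
  rw [show b * Real.sqrt (∑ i, ‖x i‖ ^ 2) = Real.sqrt (b^2 * ∑ i, ‖x i‖ ^ 2) by
    rw [Real.sqrt_mul (by positivity), Real.sqrt_sq hb]]
  apply Real.sqrt_le_sqrt
  rw [Finset.mul_sum]
  apply Finset.sum_le_sum
  intro i _
  have hxi : (WithLp.toLp 2 (diagonal d *ᵥ x.ofLp)).ofLp i
      = d i * x i := by
    simp [Matrix.mulVec_diagonal]
  rw [hxi]
  have h2 : ‖d i * x i‖ = |d i| * ‖x i‖ := by rw [norm_mul]; rfl
  rw [h2]
  have h3 : (|d i| * ‖x i‖)^2 = |d i|^2 * ‖x i‖^2 := by ring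
  rw [h3]
  have hdi := h i
  gcongr

lemma herm_inv_bound {n : Type*} [Fintype n] [DecidableEq n] {H : Matrix n n ℝ}
    (hH : H.IsHermitian) {c : ℝ} (hc : 0 < c) (h : ∀ i, c ≤ hH.eigenvalues i) :
    H * H⁻¹ = 1 ∧ ‖H⁻¹‖ ≤ 1 / c := by
  set U : Matrix n n ℝ := (hH.eigenvectorUnitary : Matrix n n ℝ) with hU
  have hUU : star U * U = 1 := Unitary.coe_star_mul_self hH.eigenvectorUnitary
  have hUU' : U * star U = 1 := Unitary.coe_mul_star_self hH.eigenvectorUnitary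
  have hne : ∀ i, hH.eigenvalues i ≠ 0 := fun i => (lt_of_lt_of_le hc (h i)).ne'
  have hspec : H = U * diagonal (RCLike.ofReal ∘ hH.eigenvalues) * star U :=
    hH.spectral_theorem
  have hdid : (RCLike.ofReal ∘ hH.eigenvalues : n → ℝ) = hH.eigenvalues := by
    funext i; simp [RCLike.ofReal]
  set B : Matrix n n ℝ := U * diagonal (fun i => (hH.eigenvalues i)⁻¹) * star U with hB
  have hHB : H * B = 1 := by
    rw [hspec, hdid, hB]
    calc U * diagonal hH.eigenvalues * star U * (U * diagonal (fun i => (hH.eigenvalues i)⁻¹) * star U)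
        = U * diagonal hH.eigenvalues * (star U * U) * diagonal (fun i => (hH.eigenvalues i)⁻¹) * star U := by
          noncomm_ring
      _ = U * (diagonal hH.eigenvalues * diagonal (fun i => (hH.eigenvalues i)⁻¹)) * star U := by
          rw [hUU]; noncomm_ring
      _ = 1 := by
          rw [Matrix.diagonal_mul_diagonal]
          have : (fun i => hH.eigenvalues i * (hH.eigenvalues i)⁻¹) = fun _ => (1:ℝ) := by
            funext i; exact mul_inv_cancel₀ (hne i)
          rw [this, Matrix.diagonal_one, mul_one, hUU']
  have hinv : H⁻¹ = B := Matrix.inv_eq_right_inv hHB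
  refine ⟨by rw [hinv]; exact hHB, ?_⟩
  rw [hinv, hB]
  have hone : ‖(1 : Matrix n n ℝ)‖ ≤ 1 := by
    have h1 : ‖(1 : Matrix n n ℝ)ᴴ * 1‖ = ‖(1 : Matrix n n ℝ)‖ * ‖(1 : Matrix n n ℝ)‖ :=
      Matrix.l2_opNorm_conjTranspose_mul_self 1
    simp only [Matrix.conjTranspose_one, mul_one] at h1
    nlinarith [norm_nonneg (1 : Matrix n n ℝ), sq_nonneg (‖(1 : Matrix n n ℝ)‖ - 1)]
  have hUn : ‖U‖ ≤ 1 := by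
    have h1 : ‖Uᴴ * U‖ = ‖U‖ * ‖U‖ := Matrix.l2_opNorm_conjTranspose_mul_self U
    rw [← Matrix.star_eq_conjTranspose, hUU] at h1
    nlinarith [norm_nonneg U]
  have hUsn : ‖star U‖ ≤ 1 := by
    rw [Matrix.star_eq_conjTranspose, Matrix.l2_opNorm_conjTranspose]
    exact hUn
  have hd : ‖diagonal (fun i => (hH.eigenvalues i)⁻¹)‖ ≤ 1 / c := by
    apply diag_norm_le _ _ (by positivity)
    intro i
    have hpos : 0 < hH.eigenvalues i := lt_of_lt_of_le hc (h i)
    rw [abs_of_pos (inv_pos.mpr hpos), one_div]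
    exact inv_anti₀ hc (h i)
  calc ‖U * diagonal (fun i => (hH.eigenvalues i)⁻¹) * star U‖
      ≤ ‖U * diagonal (fun i => (hH.eigenvalues i)⁻¹)‖ * ‖star U‖ := Matrix.l2_opNorm_mul _ _
    _ ≤ ‖U‖ * ‖diagonal (fun i => (hH.eigenvalues i)⁻¹)‖ * ‖star U‖ := by
        gcongr; exact Matrix.l2_opNorm_mul _ _
    _ ≤ 1 * (1/c) * 1 := by
        have h3 := norm_nonneg (diagonal (fun i => (hH.eigenvalues i)⁻¹) : Matrix n n ℝ)
        have h4 := norm_nonneg U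
        have h5 := norm_nonneg (star U)
        nlinarith [mul_le_mul hUn hd h3 (by norm_num : (0:ℝ) ≤ 1)]
    _ = 1 / c := by ring

lemma l2_norm_mul3 {α β γ δ : Type*} [Fintype α] [Fintype β] [Fintype γ] [Fintype δ]
    [DecidableEq α] [DecidableEq β] [DecidableEq γ] [DecidableEq δ]
    (A : Matrix α β ℝ) (B : Matrix β γ ℝ) (C : Matrix γ δ ℝ) :
    ‖A * B * C‖ ≤ ‖A‖ * ‖B‖ * ‖C‖ :=
  (Matrix.l2_opNorm_mul (A * B) C).trans
    (mul_le_mul_of_nonneg_right (Matrix.l2_opNorm_mul A B) (norm_nonneg C))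

lemma l2_norm_transpose {α β : Type*} [Fintype α] [Fintype β] [DecidableEq α] [DecidableEq β]
    (A : Matrix α β ℝ) : ‖Aᵀ‖ = ‖A‖ := by
  rw [← Matrix.conjTranspose_eq_transpose_of_trivial, Matrix.l2_opNorm_conjTranspose]

set_option maxHeartbeats 1000000 in
/-- Spectral-norm perturbation bound for orthogonal projections: for
constants 0 < c ≤ C and r > 0 there are K > 0 and η₀ > 0 (depending only on c, C, r)
such that whenever the eigenvalues of N⁻¹Φ₁ᵀΦ₁ lie in [c, C], ‖Φ₁‖₂/√N ≤ r,
‖Φ₂ − Φ₁‖₂ ≤ η with η ≤ η₀√N small enough that Φ₂ᵀΦ₂ remains invertible, the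
orthogonal projections Pⱼ = Φⱼ(ΦⱼᵀΦⱼ)⁻¹Φⱼᵀ satisfy ‖P₂ − P₁‖₂ ≤ K·η/√N. -/
theorem projection_perturbation_bound (c C r : ℝ) (hc : 0 < c) (hcC : c ≤ C) (hr : 0 < r) :
    ∃ K > 0, ∃ η₀ > 0,
      ∀ (N m : ℕ), 0 < N →
        ∀ (Φ₁ Φ₂ : Matrix (Fin N) (Fin m) ℝ)
          (hH : (((N : ℝ)⁻¹ • (Φ₁ᵀ * Φ₁))).IsHermitian),
          (∀ k, c ≤ hH.eigenvalues k ∧ hH.eigenvalues k ≤ C) →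
          ‖Φ₁‖ / Real.sqrt N ≤ r →
          ∀ η : ℝ, ‖Φ₂ - Φ₁‖ ≤ η → η ≤ η₀ * Real.sqrt N →
          IsUnit (Φ₁ᵀ * Φ₁) → IsUnit (Φ₂ᵀ * Φ₂) →
          ‖Φ₂ * (Φ₂ᵀ * Φ₂)⁻¹ * Φ₂ᵀ - Φ₁ * (Φ₁ᵀ * Φ₁)⁻¹ * Φ₁ᵀ‖ ≤ K * η / Real.sqrt N := by
  refine ⟨2*(r+1)/c + 2*r*(2*r+1)*(r+1)/c^2 + r/c, by positivity,
    min 1 (c/(2*(2*r+1))), by positivity, ?_⟩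
  intro N m hN Φ₁ Φ₂ hH hev hΦ₁r η hEη hηs hu1 hu2
  set η₀ : ℝ := min 1 (c/(2*(2*r+1))) with hη₀def
  set s : ℝ := Real.sqrt N with hsdef
  have hNR : (0:ℝ) < N := by exact_mod_cast hN
  have hs : 0 < s := Real.sqrt_pos.mpr hNR
  have hs2 : s * s = N := Real.mul_self_sqrt hNR.le
  have hη0 : 0 ≤ η := (norm_nonneg _).trans hEη
  have hη₀1 : η₀ ≤ 1 := min_le_left _ _
  have hη₀2 : η₀ ≤ c/(2*(2*r+1)) := min_le_right _ _
  have hηs' : η ≤ s := hηs.trans (by nlinarith)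
  set E : Matrix (Fin N) (Fin m) ℝ := Φ₂ - Φ₁ with hEdef
  have hΦ₂e : Φ₂ = Φ₁ + E := by rw [hEdef]; abel
  set G₁ : Matrix (Fin m) (Fin m) ℝ := Φ₁ᵀ * Φ₁ with hG₁def
  set G₂ : Matrix (Fin m) (Fin m) ℝ := Φ₂ᵀ * Φ₂ with hG₂def
  set H : Matrix (Fin m) (Fin m) ℝ := (N:ℝ)⁻¹ • G₁ with hHdef
  -- norms of Φ's and E
  have hΦ₁n : ‖Φ₁‖ ≤ r * s := by
    rw [div_le_iff₀ hs] at hΦ₁r; linarith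
  have hΦ₁tn : ‖Φ₁ᵀ‖ ≤ r * s := by rw [l2_norm_transpose]; exact hΦ₁n
  have hEn : ‖E‖ ≤ η := hEη
  have hEtn : ‖Eᵀ‖ ≤ η := by rw [l2_norm_transpose]; exact hEη
  have hΦ₂n : ‖Φ₂‖ ≤ (r+1) * s := by
    rw [hΦ₂e]
    calc ‖Φ₁ + E‖ ≤ ‖Φ₁‖ + ‖E‖ := norm_add_le _ _
      _ ≤ r * s + η := add_le_add hΦ₁n hEn
      _ ≤ (r+1)*s := by nlinarith
  have hΦ₂tn : ‖Φ₂ᵀ‖ ≤ (r+1) * s := by rw [l2_norm_transpose]; exact hΦ₂n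
  -- inverse of G₁
  obtain ⟨hHinv, hHn⟩ := herm_inv_bound hH hc (fun i => (hev i).1)
  have hG1eq : G₁ = (N:ℝ) • H := by
    rw [hHdef, smul_smul, mul_inv_cancel₀ hNR.ne', one_smul]
  have hright : G₁ * ((N:ℝ)⁻¹ • H⁻¹) = 1 := by
    rw [hG1eq, Matrix.smul_mul, Matrix.mul_smul, smul_smul, mul_inv_cancel₀ hNR.ne',
      one_smul, hHinv]
  have hG1inv : G₁⁻¹ = (N:ℝ)⁻¹ • H⁻¹ := Matrix.inv_eq_right_inv hright
  have hG1mul : G₁ * G₁⁻¹ = 1 := by rw [hG1inv]; exact hright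
  have hG1n : ‖G₁⁻¹‖ ≤ 1/(c*N) := by
    rw [hG1inv, norm_smul, Real.norm_eq_abs, abs_of_pos (inv_pos.mpr hNR)]
    calc (N:ℝ)⁻¹ * ‖H⁻¹‖ ≤ (N:ℝ)⁻¹ * (1/c) := by gcongr
      _ = 1/(c*N) := by field_simp
  -- difference of grams
  have hΔeq : G₂ - G₁ = Φ₁ᵀ * E + Eᵀ * Φ₁ + Eᵀ * E := by
    rw [hG₂def, hG₁def, hΦ₂e, Matrix.transpose_add, Matrix.add_mul, Matrix.mul_add,
      Matrix.mul_add]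
    abel
  have hΔn : ‖G₂ - G₁‖ ≤ (2*r+1)*s*η := by
    rw [hΔeq]
    calc ‖Φ₁ᵀ * E + Eᵀ * Φ₁ + Eᵀ * E‖
        ≤ ‖Φ₁ᵀ * E‖ + ‖Eᵀ * Φ₁‖ + ‖Eᵀ * E‖ := norm_add₃_le
      _ ≤ ‖Φ₁ᵀ‖*‖E‖ + ‖Eᵀ‖*‖Φ₁‖ + ‖Eᵀ‖*‖E‖ := by
          gcongr <;> exact Matrix.l2_opNorm_mul _ _
      _ ≤ (r*s)*η + η*(r*s) + η*η :=
          add_le_add (add_le_add (mul_le_mul hΦ₁tn hEn (norm_nonneg _) (by positivity))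
            (mul_le_mul hEtn hΦ₁n (norm_nonneg _) hη0))
            (mul_le_mul hEtn hEn (norm_nonneg _) hη0)
      _ ≤ (2*r+1)*s*η := by nlinarith [mul_le_mul_of_nonneg_right hηs' hη0, hs.le]
  have hΔN : ‖G₂ - G₁‖ ≤ c/2 * N := by
    calc ‖G₂ - G₁‖ ≤ (2*r+1)*s*η := hΔn
      _ ≤ (2*r+1)*s*(η₀*s) := by gcongr
      _ ≤ (2*r+1)*s*((c/(2*(2*r+1)))*s) := by gcongr
      _ = c/2 * (s*s) := by field_simp
      _ = c/2 * N := by rw [hs2]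
  -- G₂ inverse bounds
  have hG2mul : G₂⁻¹ * G₂ = 1 :=
    Matrix.nonsing_inv_mul _ ((Matrix.isUnit_iff_isUnit_det _).mp hu2)
  have hid : G₂⁻¹ = G₁⁻¹ - G₂⁻¹ * (G₂ - G₁) * G₁⁻¹ := by
    symm
    calc G₁⁻¹ - G₂⁻¹ * (G₂ - G₁) * G₁⁻¹
        = (G₂⁻¹ * G₂ - G₂⁻¹ * (G₂ - G₁)) * G₁⁻¹ := by rw [hG2mul]; noncomm_ring
      _ = G₂⁻¹ * (G₁ * G₁⁻¹) := by noncomm_ring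
      _ = G₂⁻¹ := by rw [hG1mul, mul_one]
  have hG2n : ‖G₂⁻¹‖ ≤ 2/(c*N) := by
    have h1 : ‖G₂⁻¹‖ ≤ ‖G₁⁻¹‖ + ‖G₂⁻¹‖ * ‖G₂ - G₁‖ * ‖G₁⁻¹‖ := by
      calc ‖G₂⁻¹‖ = ‖G₁⁻¹ - G₂⁻¹ * (G₂ - G₁) * G₁⁻¹‖ := by rw [← hid]
        _ ≤ ‖G₁⁻¹‖ + ‖G₂⁻¹ * (G₂ - G₁) * G₁⁻¹‖ := norm_sub_le _ _
        _ ≤ ‖G₁⁻¹‖ + ‖G₂⁻¹‖ * ‖G₂ - G₁‖ * ‖G₁⁻¹‖ := by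
            gcongr; exact l2_norm_mul3 _ _ _
    have h2 : ‖G₂⁻¹‖ * ‖G₂ - G₁‖ * ‖G₁⁻¹‖ ≤ ‖G₂⁻¹‖ * (c/2*N) * (1/(c*N)) :=
      mul_le_mul (mul_le_mul (le_refl _) hΔN (norm_nonneg _) (norm_nonneg _)) hG1n
        (norm_nonneg _) (by positivity)
    have h3 : ‖G₂⁻¹‖ * (c/2*N) * (1/(c*N)) = ‖G₂⁻¹‖ / 2 := by field_simp
    have h4 : (1:ℝ)/(c*N) ≤ 1/(c*N) := le_refl _
    have h6 : ‖G₂⁻¹‖ ≤ 1/(c*N) + ‖G₂⁻¹‖/2 := by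
      rw [← h3]; exact h1.trans (add_le_add hG1n h2)
    have h5 : 2/(c*(N:ℝ)) = 2*(1/(c*(N:ℝ))) := by ring
    rw [h5]; linarith
  have hdiffeq : G₂⁻¹ - G₁⁻¹ = -(G₂⁻¹ * (G₂ - G₁) * G₁⁻¹) := by
    nth_rewrite 1 [hid]; abel
  have hdiffn : ‖G₂⁻¹ - G₁⁻¹‖ ≤ (2/(c*N)) * ((2*r+1)*s*η) * (1/(c*N)) := by
    rw [hdiffeq, norm_neg]
    calc ‖G₂⁻¹ * (G₂ - G₁) * G₁⁻¹‖ ≤ ‖G₂⁻¹‖ * ‖G₂ - G₁‖ * ‖G₁⁻¹‖ := l2_norm_mul3 _ _ _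
      _ ≤ (2/(c*N)) * ((2*r+1)*s*η) * (1/(c*N)) := by
          apply mul_le_mul (mul_le_mul hG2n hΔn (norm_nonneg _) (by positivity)) hG1n
            (norm_nonneg _)
          have : (0:ℝ) ≤ (2*r+1)*s*η := by positivity
          positivity
  -- decomposition
  have hdec : Φ₂ * G₂⁻¹ * Φ₂ᵀ - Φ₁ * G₁⁻¹ * Φ₁ᵀ
      = E * G₂⁻¹ * Φ₂ᵀ + Φ₁ * (G₂⁻¹ - G₁⁻¹) * Φ₂ᵀ + Φ₁ * G₁⁻¹ * Eᵀ := by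
    have hEt : Eᵀ = Φ₂ᵀ - Φ₁ᵀ := by rw [hEdef, Matrix.transpose_sub]
    rw [hEdef, hEt]
    simp only [Matrix.sub_mul, Matrix.mul_sub]
    abel
  rw [hdec]
  have hT1 : ‖E * G₂⁻¹ * Φ₂ᵀ‖ ≤ η * (2/(c*N)) * ((r+1)*s) := by
    calc ‖E * G₂⁻¹ * Φ₂ᵀ‖ ≤ ‖E‖ * ‖G₂⁻¹‖ * ‖Φ₂ᵀ‖ := l2_norm_mul3 _ _ _
      _ ≤ η * (2/(c*N)) * ((r+1)*s) := by
          apply mul_le_mul (mul_le_mul hEn hG2n (norm_nonneg _) hη0) hΦ₂tn (norm_nonneg _)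
          positivity
  have hT2 : ‖Φ₁ * (G₂⁻¹ - G₁⁻¹) * Φ₂ᵀ‖
      ≤ (r*s) * ((2/(c*N)) * ((2*r+1)*s*η) * (1/(c*N))) * ((r+1)*s) := by
    calc ‖Φ₁ * (G₂⁻¹ - G₁⁻¹) * Φ₂ᵀ‖ ≤ ‖Φ₁‖ * ‖G₂⁻¹ - G₁⁻¹‖ * ‖Φ₂ᵀ‖ := l2_norm_mul3 _ _ _
      _ ≤ (r*s) * ((2/(c*N)) * ((2*r+1)*s*η) * (1/(c*N))) * ((r+1)*s) := by
          apply mul_le_mul (mul_le_mul hΦ₁n hdiffn (norm_nonneg _) (by positivity)) hΦ₂tn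
            (norm_nonneg _)
          positivity
  have hT3 : ‖Φ₁ * G₁⁻¹ * Eᵀ‖ ≤ (r*s) * (1/(c*N)) * η := by
    calc ‖Φ₁ * G₁⁻¹ * Eᵀ‖ ≤ ‖Φ₁‖ * ‖G₁⁻¹‖ * ‖Eᵀ‖ := l2_norm_mul3 _ _ _
      _ ≤ (r*s) * (1/(c*N)) * η := by
          apply mul_le_mul (mul_le_mul hΦ₁n hG1n (norm_nonneg _) (by positivity)) hEtn
            (norm_nonneg _)
          positivity
  have htri : ‖E * G₂⁻¹ * Φ₂ᵀ + Φ₁ * (G₂⁻¹ - G₁⁻¹) * Φ₂ᵀ + Φ₁ * G₁⁻¹ * Eᵀ‖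
      ≤ η * (2/(c*N)) * ((r+1)*s)
        + (r*s) * ((2/(c*N)) * ((2*r+1)*s*η) * (1/(c*N))) * ((r+1)*s)
        + (r*s) * (1/(c*N)) * η :=
    norm_add₃_le.trans (by gcongr <;> assumption)
  refine htri.trans ?_
  have hNs : (N:ℝ) = s * s := hs2.symm
  rw [hNs]
  rw [div_eq_mul_inv ((2*(r+1)/c + 2*r*(2*r+1)*(r+1)/c^2 + r/c) * η) s]
  have hceq : η * (2/(c*(s*s))) * ((r+1)*s)
      + (r*s) * ((2/(c*(s*s))) * ((2*r+1)*s*η) * (1/(c*(s*s)))) * ((r+1)*s)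
      + (r*s) * (1/(c*(s*s))) * η
      = (2*(r+1)/c + 2*r*(2*r+1)*(r+1)/c^2 + r/c) * η * s⁻¹ := by
    field_simp
  rw [hceq]
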